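/- In every nonempty compact metric space (X,d) there exists a sequence (𝓟_n)_{n≥1} of finite partitions of X into nonempty clopen sets such that for each n the partition 𝓟_n refines 𝓑_n (every member of 𝓟_n is contained in some member of 𝓑_n) and 𝓟_{n+1} refines 𝓟_n. Moreover, if X satisfies condition (⋆), then the partitions can be chosen so that 𝓟_n ⊆ 𝓑_n for every n. -/

import Mathlib

/-- Condition (⋆). -/
def SatisfiesStar (X : Type*) [TopologicalSpace X] : Prop :=
  ∀ x : X, (connectedComponent x).Nontrivial →
    ∃ h : ↥(Set.Icc (0:ℝ) 1) ≃ₜ ↥(connectedComponent x),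
      IsOpen (connectedComponent x \
        {((h ⟨0, by norm_num⟩ : ↥(connectedComponent x)) : X),
         ((h ⟨1, by norm_num⟩ : ↥(connectedComponent x)) : X)})

/-- `B*(Y,ε)`. -/
def Bstar {X : Type*} [MetricSpace X] (Y : Set X) (ε : ℝ) : Set X :=
  interior Y ∪ Metric.thickening ε (Y \ interior Y)

/-- The family `𝓑ₙ`. -/
def BFam (X : Type*) [MetricSpace X] (n : ℕ) : Set (Set X) :=
  {V | IsClopen V ∧ ∃ x : X,
    connectedComponent x ⊆ V ∧ V ⊆ Bstar (connectedComponent x) (1 / n)}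

open Set Metric

section Helpers

variable {X : Type*} [MetricSpace X] [CompactSpace X]

omit [CompactSpace X] in
lemma isOpen_Bstar (Y : Set X) (ε : ℝ) : IsOpen (Bstar Y ε) :=
  isOpen_interior.union Metric.isOpen_thickening

omit [CompactSpace X] in
lemma subset_Bstar (Y : Set X) {ε : ℝ} (hε : 0 < ε) : Y ⊆ Bstar Y ε := by
  intro y hy
  by_cases h : y ∈ interior Y
  · exact Or.inl h
  · exact Or.inr (self_subset_thickening hε _ ⟨hy, h⟩)

omit [CompactSpace X] in
lemma Bstar_mono (Y : Set X) {ε δ : ℝ} (h : ε ≤ δ) : Bstar Y ε ⊆ Bstar Y δ :=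
  union_subset_union subset_rfl (thickening_mono h _)

lemma exists_isClopen_between (x : X) {O : Set X} (hO : IsOpen O)
    (hsub : connectedComponent x ⊆ O) :
    ∃ U : Set X, IsClopen U ∧ connectedComponent x ⊆ U ∧ U ⊆ O := by
  have hcompl : IsCompact Oᶜ := hO.isClosed_compl.isCompact
  by_contra hcon
  have key := hcompl.inter_iInter_nonempty
    (fun s : { s : Set X // IsClopen s ∧ x ∈ s } => s.1) (fun s => s.2.1.1)
  have hne : ¬ (Oᶜ ∩ ⋂ s : { s : Set X // IsClopen s ∧ x ∈ s }, s.1).Nonempty := by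
    rw [← connectedComponent_eq_iInter_isClopen x]
    rintro ⟨z, hz1, hz2⟩
    exact hz1 (hsub hz2)
  have := mt key hne
  push_neg at this
  obtain ⟨u, hu⟩ := this
  refine hcon ⟨⋂ s ∈ u, (s : { s : Set X // IsClopen s ∧ x ∈ s }).1,
    ?_, ?_, ?_⟩
  · exact isClopen_biInter_finset (fun s _ => s.2.1)
  · exact subset_iInter₂ fun s _ => s.2.1.connectedComponent_subset s.2.2
  · intro z hz
    by_contra hzO
    exact absurd (hu ▸ (Set.mem_inter hzO hz)) (Set.notMem_empty z)

/-- A partition of `W` into nonempty clopen sets. -/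
def IsCPart (𝒬 : Set (Set X)) (W : Set X) : Prop :=
  𝒬.Finite ∧ (∀ P ∈ 𝒬, P.Nonempty ∧ IsClopen P) ∧ 𝒬.PairwiseDisjoint id ∧ ⋃₀ 𝒬 = W

/-- A small clopen set can be partitioned into members of `𝓑ₙ`. -/
lemma small_piece (n : ℕ) (hn : 1 ≤ n) {Q : Set X} (hQ : IsClopen Q) (hne : Q.Nonempty)
    {z : X} (hsm : Q ⊆ Metric.ball z (1 / (2 * n))) :
    ∃ 𝒬 : Set (Set X), IsCPart 𝒬 Q ∧ 𝒬 ⊆ BFam X n := by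
  by_cases hop : ∀ y ∈ Q, IsOpen (connectedComponent y)
  · -- all components are open: take the components themselves
    have hcc : ∀ y ∈ Q, connectedComponent y ⊆ Q := fun y hy =>
      hQ.connectedComponent_subset hy
    obtain ⟨b, hbQ, hbfin, hbcov⟩ := (hQ.isClosed.isCompact).elim_finite_subcover_image
      (fun y (hy : y ∈ Q) => hop y hy) (fun y hy => subset_iUnion₂ y hy |>.trans subset_rfl
        |> fun h => h (mem_connectedComponent))
    refine ⟨connectedComponent '' b, ⟨hbfin.image _, ?_, ?_, ?_⟩, ?_⟩
    · rintro P ⟨y, hy, rfl⟩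
      exact ⟨⟨y, mem_connectedComponent⟩, ⟨isClosed_connectedComponent, hop y (hbQ hy)⟩⟩
    · rintro P ⟨y, hy, rfl⟩ P' ⟨y', hy', rfl⟩ hne'
      exact connectedComponent_disjoint hne'
    · apply Set.Subset.antisymm
      · rintro p ⟨P, ⟨y, hy, rfl⟩, hp⟩
        exact hcc y (hbQ hy) hp
      · intro p hp
        obtain ⟨y, hy, hpy⟩ := mem_iUnion₂.1 (hbcov hp)
        exact ⟨connectedComponent y, ⟨y, hy, rfl⟩, hpy⟩
    · rintro P ⟨y, hy, rfl⟩
      refine ⟨⟨isClosed_connectedComponent, hop y (hbQ hy)⟩, y, subset_rfl, ?_⟩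
      rw [Bstar, (hop y (hbQ hy)).interior_eq]
      exact subset_union_left
  · -- some component is not open: `Q` itself is a member of `𝓑ₙ`
    push_neg at hop
    obtain ⟨y, hyQ, hyop⟩ := hop
    have hsne : (connectedComponent y \ interior (connectedComponent y)).Nonempty := by
      rw [Set.diff_nonempty]
      intro hsub
      exact hyop (by rw [← Set.Subset.antisymm interior_subset hsub]; exact isOpen_interior)
    obtain ⟨s, hs⟩ := hsne
    have hnpos : (0:ℝ) < n := by exact_mod_cast hn
    refine ⟨{Q}, ⟨Set.finite_singleton _, ?_, ?_, sUnion_singleton _⟩, ?_⟩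
    · rintro P rfl'
      simp_all
    · exact Set.pairwiseDisjoint_singleton _ _
    · rintro P hP
      rw [Set.mem_singleton_iff] at hP
      subst hP
      refine ⟨hQ, y, hQ.connectedComponent_subset hyQ, fun p hp => Or.inr ?_⟩
      rw [Metric.mem_thickening_iff]
      refine ⟨s, hs, ?_⟩
      have h1 : dist p z < 1 / (2 * n) := hsm hp
      have h2 : dist s z < 1 / (2 * n) :=
        hsm (hQ.connectedComponent_subset hyQ hs.1)
      have : dist p s ≤ dist p z + dist s z := dist_triangle_right p s z
      have hn0 : (n:ℝ) ≠ 0 := ne_of_gt hnpos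
      have harith : 1 / (2 * (n:ℝ)) + 1 / (2 * n) = 1 / n := by
        rw [div_add_div _ _ (by positivity) (by positivity), div_eq_div_iff (by positivity) (by positivity)]
        ring
      linarith
  
end Helpers

section Step

variable {X : Type*} [MetricSpace X] [CompactSpace X]

omit [CompactSpace X] in
lemma cpart_union {𝒜 : Set (Set X)} {W : Set X} (h𝒜 : IsCPart 𝒜 W)
    (f : (P : Set X) → P ∈ 𝒜 → Set (Set X))
    (hf : ∀ P (hP : P ∈ 𝒜), IsCPart (f P hP) P) :
    IsCPart (⋃ (P : Set X) (hP : P ∈ 𝒜), f P hP) W := by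
  obtain ⟨hfin, hmem, hdisj, huni⟩ := h𝒜
  have hsub : ∀ P (hP : P ∈ 𝒜) R, R ∈ f P hP → R ⊆ P := fun P hP R hR => by
    rw [← (hf P hP).2.2.2]; exact subset_sUnion_of_mem hR
  refine ⟨?_, ?_, ?_, ?_⟩
  · exact hfin.biUnion' (fun P hP => (hf P hP).1)
  · rintro R hR
    obtain ⟨P, hP, hRf⟩ := by simpa using hR
    exact (hf P hP).2.1 R hRf
  · rintro R hR R' hR' hne
    obtain ⟨P, hP, hRf⟩ := by simpa using hR
    obtain ⟨P', hP', hRf'⟩ := by simpa using hR'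
    by_cases hPP : P = P'
    · subst hPP
      exact (hf P hP).2.2.1 hRf hRf' hne
    · have := hdisj hP hP' hPP
      exact Set.disjoint_of_subset (hsub P hP R hRf) (hsub P' hP' R' hRf') this
  · rw [Set.sUnion_iUnion]
    simp only [Set.sUnion_iUnion]
    rw [← huni]
    apply Set.Subset.antisymm
    · refine Set.iUnion₂_subset fun P hP => ?_
      rw [(hf P hP).2.2.2]
      exact subset_sUnion_of_mem hP
    · intro p hp
      obtain ⟨P, hP, hpP⟩ := hp
      refine Set.mem_iUnion₂.2 ⟨P, hP, ?_⟩
      rw [(hf P hP).2.2.2]; exact hpP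


omit [CompactSpace X] in
lemma cpart_empty : IsCPart (∅ : Set (Set X)) (∅ : Set X) :=
  ⟨Set.finite_empty, by simp, Set.pairwiseDisjoint_empty, Set.sUnion_empty⟩

omit [CompactSpace X] in
lemma cpart_union2 {𝒬₀ 𝒬₁ : Set (Set X)} {P₀ P₁ : Set X}
    (h₀ : IsCPart 𝒬₀ P₀) (h₁ : IsCPart 𝒬₁ P₁) (hd : Disjoint P₀ P₁) :
    IsCPart (𝒬₀ ∪ 𝒬₁) (P₀ ∪ P₁) := by
  obtain ⟨hf₀, hm₀, hd₀, hu₀⟩ := h₀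
  obtain ⟨hf₁, hm₁, hd₁, hu₁⟩ := h₁
  have hs₀ : ∀ R ∈ 𝒬₀, R ⊆ P₀ := fun R hR => hu₀ ▸ subset_sUnion_of_mem hR
  have hs₁ : ∀ R ∈ 𝒬₁, R ⊆ P₁ := fun R hR => hu₁ ▸ subset_sUnion_of_mem hR
  refine ⟨hf₀.union hf₁, ?_, ?_, ?_⟩
  · rintro R (hR | hR)
    exacts [hm₀ R hR, hm₁ R hR]
  · rintro R (hR | hR) R' (hR' | hR') hne'
    · exact hd₀ hR hR' hne'
    · exact Set.disjoint_of_subset (hs₀ R hR) (hs₁ R' hR') hd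
    · exact Set.disjoint_of_subset (hs₁ R hR) (hs₀ R' hR') hd.symm
    · exact hd₁ hR hR' hne'
  · rw [Set.sUnion_union, hu₀, hu₁]

lemma small_piece' (n : ℕ) (hn : 1 ≤ n) {Q : Set X} (hQ : IsClopen Q)
    {z : X} (hsm : Q ⊆ Metric.ball z (1 / (2 * n))) :
    ∃ 𝒬 : Set (Set X), IsCPart 𝒬 Q ∧ 𝒬 ⊆ BFam X n := by
  by_cases hne : Q.Nonempty
  · exact small_piece n hn hQ hne hsm
  · rw [Set.not_nonempty_iff_eq_empty] at hne
    subst hne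
    exact ⟨∅, cpart_empty, Set.empty_subset _⟩

/-- Main step: any nonempty clopen set admits a partition refining `𝓑ₙ`,
which under (⋆) lies in `𝓑ₙ`. -/
lemma step (n : ℕ) (hn : 1 ≤ n) {W : Set X} (hW : IsClopen W) (hne : W.Nonempty) :
    ∃ 𝒬 : Set (Set X), IsCPart 𝒬 W ∧ (∀ P ∈ 𝒬, ∃ U ∈ BFam X n, P ⊆ U) ∧
      (SatisfiesStar X → 𝒬 ⊆ BFam X n) := by
  classical
  have hnpos : (0:ℝ) < n := by exact_mod_cast hn
  set ε : ℝ := 1 / n with hε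
  have hεpos : 0 < ε := by positivity
  set δ : ℝ := ε / 8 with hδ
  have hδpos : 0 < δ := by positivity
  have hδε : δ ≤ ε := by rw [hδ]; linarith
  -- choose clopen neighborhoods of components
  have hU : ∀ x ∈ W, ∃ U : Set X, IsClopen U ∧ connectedComponent x ⊆ U ∧
      U ⊆ Bstar (connectedComponent x) δ ∩ W := by
    intro x hx
    apply exists_isClopen_between x ((isOpen_Bstar _ _).inter hW.2)
    exact subset_inter (subset_Bstar _ hδpos) (hW.connectedComponent_subset hx)
  choose! U hUclopen hUcc hUsub using hU
  -- finite subcover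
  have hcover : W ⊆ ⋃ x ∈ W, U x := fun x hx =>
    Set.mem_biUnion hx (hUcc x hx mem_connectedComponent)
  obtain ⟨b, hbW, hbfin, hbcov⟩ := (hW.isClosed.isCompact).elim_finite_subcover_image
    (fun x hx => (hUclopen x hx).2) hcover
  -- atoms of the subcover
  set A : X → Set X := fun y => ⋂ x ∈ b, (if y ∈ U x then U x else W \ U x) with hA
  have hfact : ∀ x ∈ b, ∀ y : X, IsClopen (if y ∈ U x then U x else W \ U x) := by
    intro x hx y
    split
    · exact hUclopen x (hbW hx)
    · exact hW.diff (hUclopen x (hbW hx))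
  have hAclopen : ∀ y : X, IsClopen (A y) := fun y =>
    Set.Finite.isClopen_biInter hbfin (fun x hx => hfact x hx y)
  have hmemA : ∀ y ∈ W, y ∈ A y := by
    intro y hy
    refine Set.mem_iInter₂.2 fun x hx => ?_
    split
    · assumption
    · exact ⟨hy, by assumption⟩
  have hAx : ∀ y ∈ W, ∃ x ∈ b, y ∈ U x ∧ A y ⊆ U x := by
    intro y hy
    obtain ⟨x, hx, hyx⟩ := Set.mem_iUnion₂.1 (hbcov hy)
    refine ⟨x, hx, hyx, ?_⟩
    refine (Set.biInter_subset_of_mem hx).trans ?_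
    rw [if_pos hyx]
  have hAsubW : ∀ y ∈ W, A y ⊆ W := by
    intro y hy
    obtain ⟨x, hx, _, hsub⟩ := hAx y hy
    exact hsub.trans ((hUsub x (hbW hx)).trans Set.inter_subset_right)
  have hsig : ∀ y z : X, z ∈ A y → ∀ x ∈ b, (z ∈ U x ↔ y ∈ U x) := by
    intro y z hz x hx
    have := Set.mem_iInter₂.1 hz x hx
    constructor
    · intro hzx
      by_contra hyx
      rw [if_neg hyx] at this
      exact this.2 hzx
    · intro hyx
      rwa [if_pos hyx] at this
  have hAeq : ∀ y z : X, z ∈ A y → A z = A y := by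
    intro y z hz
    refine Set.iInter₂_congr fun x hx => ?_
    rw [if_congr (iff_of_eq (propext (hsig y z hz x hx))) rfl rfl]
  set 𝒜 : Set (Set X) := A '' W with h𝒜
  have h𝒜fin : 𝒜.Finite := by
    have : 𝒜 ⊆ (fun c : Set X => ⋂ x ∈ b, (if x ∈ c then U x else W \ U x)) ''
        {c : Set X | c ⊆ b} := by
      rintro P ⟨y, hy, rfl⟩
      refine ⟨b ∩ {x : X | y ∈ U x}, Set.inter_subset_left, ?_⟩
      refine Set.iInter₂_congr fun x hx => ?_
      have hxc : (x ∈ b ∩ {x : X | y ∈ U x}) ↔ (y ∈ U x) := by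
        simp [hx]
      by_cases hyU : y ∈ U x
      · rw [if_pos (hxc.2 hyU), if_pos hyU]
      · rw [if_neg (fun h => hyU (hxc.1 h)), if_neg hyU]
    exact Set.Finite.subset ((hbfin.finite_subsets).image _) this
  have h𝒜part : IsCPart 𝒜 W := by
    refine ⟨h𝒜fin, ?_, ?_, ?_⟩
    · rintro P ⟨y, hy, rfl⟩
      exact ⟨⟨y, hmemA y hy⟩, hAclopen y⟩
    · rintro P ⟨y, hy, rfl⟩ P' ⟨y', hy', rfl⟩ hne'
      exact Set.disjoint_left.2 fun z hz hz' =>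
        hne' (by rw [← hAeq y z hz, hAeq y' z hz'])
    · apply Set.Subset.antisymm
      · rintro p ⟨P, ⟨y, hy, rfl⟩, hp⟩
        exact hAsubW y hy hp
      · intro p hp
        exact ⟨A p, ⟨p, hp, rfl⟩, hmemA p hp⟩
  -- refine each atom
  have hpart : ∀ P ∈ 𝒜, ∃ 𝒬P : Set (Set X), IsCPart 𝒬P P ∧
      (∀ R ∈ 𝒬P, ∃ U' ∈ BFam X n, R ⊆ U') ∧
      (SatisfiesStar X → 𝒬P ⊆ BFam X n) := by
    rintro P ⟨y, hy, rfl⟩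
    obtain ⟨x₀, hx₀b, hyx₀, hPU⟩ := hAx y hy
    have hPclopen : IsClopen (A y) := hAclopen y
    have hPne : (A y).Nonempty := ⟨y, hmemA y hy⟩
    have hPsub : A y ⊆ Bstar (connectedComponent x₀) δ :=
      hPU.trans ((hUsub x₀ (hbW hx₀b)).trans Set.inter_subset_left)
    have hUmem : U x₀ ∈ BFam X n := by
      refine ⟨hUclopen x₀ (hbW hx₀b), x₀, hUcc x₀ (hbW hx₀b), ?_⟩
      exact ((hUsub x₀ (hbW hx₀b)).trans Set.inter_subset_left).trans
        (Bstar_mono _ hδε)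
    by_cases hin : connectedComponent x₀ ⊆ A y
    · have hmem : A y ∈ BFam X n :=
        ⟨hPclopen, x₀, hin, hPsub.trans (Bstar_mono _ hδε)⟩
      exact ⟨{A y}, ⟨Set.finite_singleton _,
        by rintro R hR; rw [Set.mem_singleton_iff] at hR; subst hR; exact ⟨hPne, hPclopen⟩,
        Set.pairwiseDisjoint_singleton _ _, Set.sUnion_singleton _⟩,
        by rintro R hR; rw [Set.mem_singleton_iff] at hR; subst hR
           exact ⟨A y, hmem, subset_rfl⟩,
        fun _ R hR => by rw [Set.mem_singleton_iff] at hR; subst hR; exact hmem⟩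
    · have hdisjcc : Disjoint (A y) (connectedComponent x₀) := by
        rw [Set.disjoint_right]
        intro z hzc hzP
        refine hin ?_
        have h1 : connectedComponent z ⊆ A y := hPclopen.connectedComponent_subset hzP
        rwa [← connectedComponent_eq hzc] at h1
      by_cases hs : SatisfiesStar X
      · -- under (⋆): the atom is near at most two endpoints
        have hPthick : A y ⊆
            Metric.thickening δ (connectedComponent x₀ \ interior (connectedComponent x₀)) := by
          intro p hp
          rcases hPsub hp with h | h
          · exact absurd (interior_subset h) (Set.disjoint_left.1 hdisjcc hp)
          · exact h
        obtain ⟨a₀, a₁, hF⟩ : ∃ a₀ a₁ : X,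
            connectedComponent x₀ \ interior (connectedComponent x₀) ⊆ {a₀, a₁} := by
          by_cases hnt : (connectedComponent x₀).Nontrivial
          · obtain ⟨h, hopen⟩ := hs x₀ hnt
            refine ⟨((h ⟨0, by norm_num⟩ : ↥(connectedComponent x₀)) : X),
              ((h ⟨1, by norm_num⟩ : ↥(connectedComponent x₀)) : X), ?_⟩
            intro w hw
            by_contra hwab
            exact hw.2 (interior_maximal Set.diff_subset hopen ⟨hw.1, hwab⟩)
          · refine ⟨x₀, x₀, ?_⟩
            have : connectedComponent x₀ = {x₀} :=
              (Set.not_nontrivial_iff.1 hnt).eq_singleton_of_mem mem_connectedComponent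
            rw [this]
            intro w hw
            exact Or.inl hw.1
        have hPballs : A y ⊆ Metric.ball a₀ δ ∪ Metric.ball a₁ δ := by
          refine hPthick.trans ?_
          refine (Metric.thickening_subset_of_subset δ hF).trans ?_
          rw [Set.insert_eq, Metric.thickening_union, Metric.thickening_singleton,
            Metric.thickening_singleton]
        have hhalf : δ ≤ 1 / (2 * (n:ℝ)) := by
          have : (1:ℝ) / (2 * n) = ε / 2 := by rw [hε]; ring
          rw [this, hδ]; linarith
        by_cases hdist : dist a₀ a₁ < 2 * δ
        · -- one small ball
          have hsmall : A y ⊆ Metric.ball a₀ (1 / (2 * n)) := by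
            intro p hp
            have h2n : (1:ℝ) / (2 * n) = ε / 2 := by rw [hε]; ring
            rcases hPballs hp with h | h
            · rw [Metric.mem_ball] at h ⊢
              rw [h2n, hδ] at *
              linarith
            · rw [Metric.mem_ball] at h ⊢
              have := dist_triangle p a₁ a₀
              have hcomm : dist a₁ a₀ = dist a₀ a₁ := dist_comm a₁ a₀
              rw [h2n]
              rw [hδ] at *
              linarith
          obtain ⟨𝒬, h𝒬, h𝒬B⟩ := small_piece n hn hPclopen hPne hsmall
          exact ⟨𝒬, h𝒬, fun R hR => ⟨R, h𝒬B hR, subset_rfl⟩, fun _ => h𝒬B⟩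
        · push_neg at hdist
          set P₀ : Set X := A y ∩ Metric.ball a₀ δ with hP₀
          set P₁ : Set X := A y \ Metric.ball a₀ δ with hP₁
          have hP₁ball : P₁ ⊆ Metric.ball a₁ δ := by
            intro p hp
            rcases hPballs hp.1 with h | h
            · exact absurd h hp.2
            · exact h
          have hP₀eq : P₀ = A y \ Metric.ball a₁ δ := by
            apply Set.Subset.antisymm
            · rintro p ⟨hp, hpb⟩
              refine ⟨hp, fun hpb1 => ?_⟩
              rw [Metric.mem_ball] at hpb hpb1
              have := dist_triangle a₀ p a₁
              rw [dist_comm a₀ p] at this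
              linarith
            · rintro p ⟨hp, hpb⟩
              refine ⟨hp, ?_⟩
              rcases hPballs hp with h | h
              · exact h
              · exact absurd h hpb
          have hP₁eq : P₁ = A y ∩ Metric.ball a₁ δ := by
            apply Set.Subset.antisymm
            · exact fun p hp => ⟨hp.1, hP₁ball hp⟩
            · rintro p ⟨hp, hpb⟩
              refine ⟨hp, fun hpb0 => ?_⟩
              rw [Metric.mem_ball] at hpb hpb0
              have := dist_triangle a₀ p a₁
              rw [dist_comm a₀ p] at this
              linarith
          have hP₀clopen : IsClopen P₀ := by
            constructor
            · rw [hP₀eq, Set.diff_eq]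
              exact hPclopen.1.inter (Metric.isOpen_ball).isClosed_compl
            · exact hPclopen.2.inter Metric.isOpen_ball
          have hP₁clopen : IsClopen P₁ := by
            constructor
            · rw [hP₁, Set.diff_eq]
              exact hPclopen.1.inter (Metric.isOpen_ball).isClosed_compl
            · rw [hP₁eq]
              exact hPclopen.2.inter Metric.isOpen_ball
          have hP₀small : P₀ ⊆ Metric.ball a₀ (1 / (2 * n)) := fun p hp =>
            Metric.ball_subset_ball hhalf hp.2
          have hP₁small : P₁ ⊆ Metric.ball a₁ (1 / (2 * n)) := fun p hp =>
            Metric.ball_subset_ball hhalf (hP₁ball hp)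
          obtain ⟨𝒬₀, h𝒬₀, h𝒬₀B⟩ := small_piece' n hn hP₀clopen hP₀small
          obtain ⟨𝒬₁, h𝒬₁, h𝒬₁B⟩ := small_piece' n hn hP₁clopen hP₁small
          have hdisj01 : Disjoint P₀ P₁ :=
            Set.disjoint_left.2 fun p hp hp' => hp'.2 hp.2
          have huni01 : P₀ ∪ P₁ = A y := Set.inter_union_diff _ _
          refine ⟨𝒬₀ ∪ 𝒬₁, ?_, fun R hR => ?_, fun _ R hR => ?_⟩
          · have := cpart_union2 h𝒬₀ h𝒬₁ hdisj01
            rwa [huni01] at this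
          · rcases hR with hR | hR
            · exact ⟨R, h𝒬₀B hR, subset_rfl⟩
            · exact ⟨R, h𝒬₁B hR, subset_rfl⟩
          · rcases hR with hR | hR
            · exact h𝒬₀B hR
            · exact h𝒬₁B hR
      · -- no (⋆): just use the covering set
        exact ⟨{A y}, ⟨Set.finite_singleton _,
          by rintro R hR; rw [Set.mem_singleton_iff] at hR; subst hR; exact ⟨hPne, hPclopen⟩,
          Set.pairwiseDisjoint_singleton _ _, Set.sUnion_singleton _⟩,
          by rintro R hR; rw [Set.mem_singleton_iff] at hR; subst hR
             exact ⟨U x₀, hUmem, hPU⟩,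
          fun hstar => absurd hstar hs⟩
  choose! f hf1 hf2 hf3 using hpart
  refine ⟨⋃ (P : Set X) (hP : P ∈ 𝒜), f P, ?_, ?_, ?_⟩
  · exact cpart_union h𝒜part (fun P _ => f P) (fun P hP => hf1 P hP)
  · intro R hR
    obtain ⟨P, hP, hRf⟩ := by simpa using hR
    exact hf2 P hP R hRf
  · intro hstar R hR
    obtain ⟨P, hP, hRf⟩ := by simpa using hR
    exact hf3 P hP hstar hRf

end Step

section Seq

variable {X : Type*} [MetricSpace X] [CompactSpace X]

open Classical in
noncomputable def refFun (X : Type*) [MetricSpace X] [CompactSpace X] (n : ℕ) (W : Set X) :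
    Set (Set X) :=
  if h : IsClopen W ∧ W.Nonempty then
    (step (n + 1) (Nat.le_add_left 1 n) h.1 h.2).choose else ∅

lemma refFun_spec (n : ℕ) {W : Set X} (h1 : IsClopen W) (h2 : W.Nonempty) :
    IsCPart (refFun X n W) W ∧ (∀ P ∈ refFun X n W, ∃ U ∈ BFam X (n + 1), P ⊆ U) ∧
      (SatisfiesStar X → refFun X n W ⊆ BFam X (n + 1)) := by
  rw [refFun]
  rw [dif_pos ⟨h1, h2⟩]
  exact (step (n + 1) (Nat.le_add_left 1 n) h1 h2).choose_spec

noncomputable def PSeq (X : Type*) [MetricSpace X] [CompactSpace X] : ℕ → Set (Set X)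
  | 0 => {Set.univ}
  | (n + 1) => ⋃ W ∈ PSeq X n, refFun X n W

lemma PSeq_cpart (X : Type*) [MetricSpace X] [CompactSpace X] [Nonempty X] (n : ℕ) :
    IsCPart (PSeq X n) (Set.univ : Set X) := by
  induction n with
  | zero =>
    show IsCPart ({Set.univ} : Set (Set X)) (Set.univ : Set X)
    refine ⟨Set.finite_singleton _, ?_, Set.pairwiseDisjoint_singleton _ _,
      Set.sUnion_singleton _⟩
    rintro P hP
    rw [Set.mem_singleton_iff] at hP
    subst hP
    exact ⟨Set.univ_nonempty, isClopen_univ⟩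
  | succ n ih =>
    have : PSeq X (n + 1) = ⋃ (W : Set X) (hW : W ∈ PSeq X n), refFun X n W := rfl
    rw [this]
    exact cpart_union ih (fun W _ => refFun X n W)
      (fun W hW => (refFun_spec n (ih.2.1 W hW).2 (ih.2.1 W hW).1).1)

end Seq

/-- In a nonempty compact metric space there is a sequence of finite partitions
into nonempty clopen sets, `𝓟ₙ` refining `𝓑ₙ` and `𝓟ₙ₊₁` refining `𝓟ₙ`;
under condition (⋆) one can moreover take `𝓟ₙ ⊆ 𝓑ₙ`. -/
theorem exists_partition_sequence {X : Type*} [MetricSpace X] [CompactSpace X] [Nonempty X] :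
    ∃ 𝓟 : ℕ → Set (Set X),
      ∀ n, 1 ≤ n →
        (𝓟 n).Finite ∧
        (∀ W ∈ 𝓟 n, W.Nonempty ∧ IsClopen W) ∧
        (𝓟 n).PairwiseDisjoint id ∧
        ⋃₀ 𝓟 n = Set.univ ∧
        (∀ W ∈ 𝓟 n, ∃ U ∈ BFam X n, W ⊆ U) ∧
        (∀ W ∈ 𝓟 (n + 1), ∃ U ∈ 𝓟 n, W ⊆ U) ∧
        (SatisfiesStar X → 𝓟 n ⊆ BFam X n) := by
  refine ⟨PSeq X, fun n hn => ?_⟩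
  obtain ⟨m, rfl⟩ : ∃ m, n = m + 1 := ⟨n - 1, (Nat.succ_pred_eq_of_pos hn).symm⟩
  have h := PSeq_cpart X (m + 1)
  have hm := PSeq_cpart X m
  have hmem : ∀ W ∈ PSeq X (m + 1), ∃ W' ∈ PSeq X m, W ∈ refFun X m W' := by
    intro W hW
    have he : PSeq X (m + 1) = ⋃ W' ∈ PSeq X m, refFun X m W' := rfl
    rw [he] at hW
    simpa using hW
  refine ⟨h.1, h.2.1, h.2.2.1, h.2.2.2, ?_, ?_, ?_⟩
  · intro W hW
    obtain ⟨W', hW', hWf⟩ := hmem W hW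
    exact (refFun_spec m (hm.2.1 W' hW').2 (hm.2.1 W' hW').1).2.1 W hWf
  · intro W hW
    have hmem2 : ∃ W' ∈ PSeq X (m + 1), W ∈ refFun X (m + 1) W' := by
      have he : PSeq X (m + 1 + 1) = ⋃ W' ∈ PSeq X (m + 1), refFun X (m + 1) W' := rfl
      rw [he] at hW
      simpa using hW
    obtain ⟨W', hW', hWf⟩ := hmem2
    refine ⟨W', hW', ?_⟩
    have hspec := (refFun_spec (m + 1) (h.2.1 W' hW').2 (h.2.1 W' hW').1).1
    rw [← hspec.2.2.2]
    exact Set.subset_sUnion_of_mem hWf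
  · intro hstar W hW
    obtain ⟨W', hW', hWf⟩ := hmem W hW
    exact (refFun_spec m (hm.2.1 W' hW').2 (hm.2.1 W' hW').1).2.2 hstar hWf
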